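/- For every integer d ≥ 1 there exist constants 0 < c₁ ≤ c₂ (depending only on d) such that the following holds for every integer m ≥ 1: if X₁, …, X_m, Y are independent random points, each uniformly distributed in the unit cube [0,1]^d ⊆ EuclideanSpace ℝ (Fin d) (i.e. the joint law is the (m+1)-fold product of the uniform probability measure on the cube), then c₁ · m^{-1/d} ≤ E[ min_{1 ≤ j ≤ m} ‖Y - X_j‖ ] ≤ c₂ · m^{-1/d}. (This is the expected length of the edge added in an iteration of the nearest-vertex tree-building algorithm.) -/

import Mathlib

open MeasureTheory

/-- The unit cube `[0,1]^d` in `EuclideanSpace ℝ (Fin d)`. -/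
def unitCube (d : ℕ) : Set (EuclideanSpace ℝ (Fin d)) :=
  {x | ∀ i, x i ∈ Set.Icc (0 : ℝ) 1}

/-- The uniform probability measure on the unit cube (Lebesgue restricted to the cube). -/
noncomputable def cubeUniform (d : ℕ) : Measure (EuclideanSpace ℝ (Fin d)) :=
  volume.restrict (unitCube d)

namespace Stmt15Aux


lemma volume_box {d : ℕ} (S : Fin d → Set ℝ) (hS : ∀ i, MeasurableSet (S i)) :
    volume {x : EuclideanSpace ℝ (Fin d) | ∀ i, x i ∈ S i} = ∏ i, volume (S i) := by
  have h : {x : EuclideanSpace ℝ (Fin d) | ∀ i, x i ∈ S i}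
      = (MeasurableEquiv.toLp 2 (Fin d → ℝ)).symm ⁻¹' (Set.pi Set.univ S) := by
    ext x; simp [Set.mem_pi, MeasurableEquiv.coe_toLp_symm]
  rw [h, (EuclideanSpace.volume_preserving_symm_measurableEquiv_toLp (Fin d)).measure_preimage
    (MeasurableSet.univ_pi hS).nullMeasurableSet, volume_pi_pi]

lemma measurableSet_box {d : ℕ} (S : Fin d → Set ℝ) (hS : ∀ i, MeasurableSet (S i)) :
    MeasurableSet {x : EuclideanSpace ℝ (Fin d) | ∀ i, x i ∈ S i} := by
  have h : {x : EuclideanSpace ℝ (Fin d) | ∀ i, x i ∈ S i}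
      = (MeasurableEquiv.toLp 2 (Fin d → ℝ)).symm ⁻¹' (Set.pi Set.univ S) := by
    ext x; simp [Set.mem_pi, MeasurableEquiv.coe_toLp_symm]
  rw [h]
  exact (MeasurableEquiv.toLp 2 (Fin d → ℝ)).symm.measurable (MeasurableSet.univ_pi hS)

lemma volume_unitCube (d : ℕ) : volume (unitCube d) = 1 := by
  have : unitCube d = {x : EuclideanSpace ℝ (Fin d) | ∀ i, x i ∈ Set.Icc (0:ℝ) 1} := rfl
  rw [this, volume_box _ (fun i => measurableSet_Icc)]
  simp [Real.volume_Icc]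

lemma measurableSet_unitCube (d : ℕ) : MeasurableSet (unitCube d) :=
  measurableSet_box _ (fun _ => measurableSet_Icc)

instance (d : ℕ) : IsProbabilityMeasure (cubeUniform d) := by
  constructor
  rw [cubeUniform, Measure.restrict_apply_univ, volume_unitCube]

variable {d : ℕ}

lemma abs_coord_le_norm (x : EuclideanSpace ℝ (Fin d)) (i : Fin d) : |x i| ≤ ‖x‖ := by
  rw [EuclideanSpace.norm_eq]
  rw [show |x i| = Real.sqrt ((x i)^2) from (Real.sqrt_sq_eq_abs _).symm]
  apply Real.sqrt_le_sqrt
  simpa [Real.norm_eq_abs, sq_abs] using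
    Finset.single_le_sum (f := fun j => (x j)^2) (fun j _ => sq_nonneg _) (Finset.mem_univ i)

lemma norm_lt_sqrt_of_coord_lt (hd : 1 ≤ d) {x : EuclideanSpace ℝ (Fin d)} {s : ℝ}
    (h : ∀ i, |x i| < s) : ‖x‖ < s * Real.sqrt d := by
  have hs : 0 < s := lt_of_le_of_lt (abs_nonneg _) (h ⟨0, hd⟩)
  rw [EuclideanSpace.norm_eq]
  have hlt : ∑ i : Fin d, ‖x i‖^2 < ∑ _i : Fin d, s^2 := by
    apply Finset.sum_lt_sum_of_nonempty (Finset.univ_nonempty_iff.mpr ⟨⟨0, hd⟩⟩)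
    intro i _
    rw [Real.norm_eq_abs]
    exact pow_lt_pow_left₀ (h i) (abs_nonneg _) (by norm_num)
  calc Real.sqrt (∑ i : Fin d, ‖x i‖^2) < Real.sqrt (∑ _i : Fin d, s^2) :=
        Real.sqrt_lt_sqrt (by positivity) hlt
    _ = s * Real.sqrt d := by
        rw [Finset.sum_const, Finset.card_univ, Fintype.card_fin, nsmul_eq_mul,
          Real.sqrt_mul (by positivity), Real.sqrt_sq hs.le, mul_comm]

/-- Upper bound for the uniform measure of a ball. -/
lemma cubeUniform_ball_le (y : EuclideanSpace ℝ (Fin d)) {r : ℝ} (hr : 0 ≤ r) :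
    cubeUniform d (Metric.ball y r) ≤ ENNReal.ofReal ((2*r)^d) := by
  have hsub : Metric.ball y r ⊆
      {x : EuclideanSpace ℝ (Fin d) | ∀ i, x i ∈ Set.Icc (y i - r) (y i + r)} := by
    intro x hx i
    have h : |(x - y) i| ≤ ‖x - y‖ := abs_coord_le_norm _ i
    have h2 : ‖x - y‖ < r := by rwa [Metric.mem_ball, dist_eq_norm] at hx
    have h3 := (h.trans h2.le)
    have hsub' : (x - y) i = x i - y i := rfl
    rw [hsub', abs_le] at h3
    constructor <;> linarith [h3.1, h3.2]
  calc cubeUniform d (Metric.ball y r)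
      ≤ volume (Metric.ball y r) := Measure.restrict_le_self _
    _ ≤ volume {x : EuclideanSpace ℝ (Fin d) | ∀ i, x i ∈ Set.Icc (y i - r) (y i + r)} :=
        measure_mono hsub
    _ = ∏ _i : Fin d, ENNReal.ofReal (2*r) := by
        rw [volume_box _ (fun i => measurableSet_Icc)]
        congr 1; funext i; rw [Real.volume_Icc]; ring_nf
    _ = ENNReal.ofReal ((2*r)^d) := by
        rw [Finset.prod_const, Finset.card_univ, Fintype.card_fin,
          ← ENNReal.ofReal_pow (by positivity)]

/-- Lower bound: a ball of radius `s√d` around a cube point captures mass `≥ s^d`. -/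
lemma le_cubeUniform_ball (hd : 1 ≤ d) {y : EuclideanSpace ℝ (Fin d)} (hy : y ∈ unitCube d)
    {s : ℝ} (hs0 : 0 < s) (hs1 : s ≤ 1) :
    ENNReal.ofReal (s^d) ≤ cubeUniform d {x | ‖y - x‖ < s * Real.sqrt d} := by
  set a : Fin d → ℝ := fun i => min (y i) (1 - s) with ha
  set B : Set (EuclideanSpace ℝ (Fin d)) := {x | ∀ i, x i ∈ Set.Ioo (a i) (a i + s)} with hB
  have hy' : ∀ i, y i ∈ Set.Icc (0:ℝ) 1 := hy
  have haprop : ∀ i, 0 ≤ a i ∧ a i + s ≤ 1 ∧ a i ≤ y i ∧ y i ≤ a i + s := by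
    intro i
    have h1 := (hy' i).1; have h2 := (hy' i).2
    refine ⟨le_min h1 (by linarith), ?_, min_le_left _ _, ?_⟩
    · have : a i ≤ 1 - s := min_le_right _ _
      linarith
    · rcases le_total (y i) (1 - s) with h | h
      · have : a i = y i := min_eq_left h; linarith
      · have : a i = 1 - s := min_eq_right h; linarith
  have hBcube : B ⊆ unitCube d := by
    intro x hx i
    have h := hx i
    have h2 := haprop i
    exact ⟨by linarith [h.1, h2.1], by linarith [h.2, h2.2.1]⟩
  have hBball : B ⊆ {x | ‖y - x‖ < s * Real.sqrt d} := by
    intro x hx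
    apply norm_lt_sqrt_of_coord_lt hd
    intro i
    have h := hx i
    have h2 := haprop i
    have hsub' : (y - x) i = y i - x i := rfl
    rw [hsub', abs_lt]
    constructor <;> [linarith [h.2, h2.2.2.1]; linarith [h.1, h2.2.2.2]]
  have hBmeas : MeasurableSet B := measurableSet_box _ (fun i => measurableSet_Ioo)
  have hvol : volume B = ENNReal.ofReal (s^d) := by
    rw [hB, volume_box _ (fun i => measurableSet_Ioo)]
    have : ∀ i : Fin d, volume (Set.Ioo (a i) (a i + s)) = ENNReal.ofReal s := by
      intro i; rw [Real.volume_Ioo]; ring_nf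
    rw [Finset.prod_congr rfl (fun i _ => this i), Finset.prod_const, Finset.card_univ,
      Fintype.card_fin, ← ENNReal.ofReal_pow hs0.le]
  calc ENNReal.ofReal (s^d) = volume B := hvol.symm
    _ = volume (B ∩ unitCube d) := by rw [Set.inter_eq_left.mpr hBcube]
    _ = cubeUniform d B := (Measure.restrict_apply hBmeas).symm
    _ ≤ cubeUniform d {x | ‖y - x‖ < s * Real.sqrt d} := measure_mono hBball


lemma norm_le_sqrt_of_coord_le {d : ℕ} {x : EuclideanSpace ℝ (Fin d)} {s : ℝ}
    (h : ∀ i, |x i| ≤ s) (hs : 0 ≤ s) : ‖x‖ ≤ s * Real.sqrt d := by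
  rw [EuclideanSpace.norm_eq]
  have hsum : ∑ i : Fin d, ‖x i‖^2 ≤ ∑ _i : Fin d, s^2 := by
    apply Finset.sum_le_sum
    intro i _
    rw [Real.norm_eq_abs]
    exact pow_le_pow_left₀ (abs_nonneg _) (h i) 2
  calc Real.sqrt (∑ i : Fin d, ‖x i‖^2) ≤ Real.sqrt (∑ _i : Fin d, s^2) := Real.sqrt_le_sqrt hsum
    _ = s * Real.sqrt d := by
        rw [Finset.sum_const, Finset.card_univ, Fintype.card_fin, nsmul_eq_mul,
          Real.sqrt_mul (by positivity), Real.sqrt_sq hs, mul_comm]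

variable {d m : ℕ}

lemma closed_fiber (y : EuclideanSpace ℝ (Fin d)) (t : ℝ) :
    MeasurableSet {x : EuclideanSpace ℝ (Fin d) | t ≤ ‖y - x‖} := by
  have : Continuous fun x : EuclideanSpace ℝ (Fin d) => ‖y - x‖ :=
    (continuous_const.sub continuous_id).norm
  exact (isClosed_le continuous_const this).measurableSet

lemma event_measurable (d m : ℕ) (t : ℝ) :
    MeasurableSet {ω : (Fin m → EuclideanSpace ℝ (Fin d)) × EuclideanSpace ℝ (Fin d) |
      ∀ j, t ≤ ‖ω.2 - ω.1 j‖} := by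
  have : {ω : (Fin m → EuclideanSpace ℝ (Fin d)) × EuclideanSpace ℝ (Fin d) |
      ∀ j, t ≤ ‖ω.2 - ω.1 j‖} = ⋂ j, {ω | t ≤ ‖ω.2 - ω.1 j‖} := by
    ext ω; simp
  rw [this]
  apply MeasurableSet.iInter
  intro j
  have hc : Continuous fun ω : (Fin m → EuclideanSpace ℝ (Fin d)) × EuclideanSpace ℝ (Fin d) =>
      ‖ω.2 - ω.1 j‖ := (continuous_snd.sub ((continuous_apply j).comp continuous_fst)).norm
  exact (isClosed_le continuous_const hc).measurableSet

lemma event_measure (d m : ℕ) (t : ℝ) :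
    ((Measure.pi fun _ : Fin m => cubeUniform d).prod (cubeUniform d))
      {ω | ∀ j : Fin m, t ≤ ‖ω.2 - ω.1 j‖}
      = ∫⁻ y, (cubeUniform d {x | t ≤ ‖y - x‖})^m ∂(cubeUniform d) := by
  rw [Measure.prod_apply_symm (event_measurable d m t)]
  apply lintegral_congr
  intro y
  have hpre : ((fun xs : Fin m → EuclideanSpace ℝ (Fin d) => (xs, y)) ⁻¹'
      {ω | ∀ j : Fin m, t ≤ ‖ω.2 - ω.1 j‖})
      = Set.pi Set.univ (fun _ : Fin m => {x | t ≤ ‖y - x‖}) := by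
    ext xs; simp [Set.mem_pi]
  rw [hpre, Measure.pi_pi, Finset.prod_const, Finset.card_univ, Fintype.card_fin]



lemma tau_pos {d m : ℕ} (hm : 1 ≤ m) : 0 < (m:ℝ) ^ (-(1:ℝ)/d) :=
  Real.rpow_pos_of_pos (by exact_mod_cast hm) _

lemma tau_le_one {d m : ℕ} (hm : 1 ≤ m) : (m:ℝ) ^ (-(1:ℝ)/d) ≤ 1 :=
  Real.rpow_le_one_of_one_le_of_nonpos (by exact_mod_cast hm)
    (by rw [neg_div]; exact neg_nonpos.mpr (by positivity))

lemma tau_pow {d m : ℕ} (hd : 1 ≤ d) (hm : 1 ≤ m) :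
    ((m:ℝ) ^ (-(1:ℝ)/d))^d = 1/m := by
  rw [← Real.rpow_natCast ((m:ℝ) ^ (-(1:ℝ)/d)) d, ← Real.rpow_mul (Nat.cast_nonneg m)]
  have hd0 : (d:ℝ) ≠ 0 := Nat.cast_ne_zero.mpr (by omega)
  have : (-(1:ℝ)/d) * d = -1 := by field_simp
  rw [this, Real.rpow_neg_one, one_div]

lemma real_upper {d m k : ℕ} (hd : 1 ≤ d) (hm : 1 ≤ m) (hk : 1 ≤ k) :
    (1 - (min ((k:ℝ) * (m:ℝ) ^ (-(1:ℝ)/d)) 1)^d)^m ≤ (1/2:ℝ)^k := by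
  set τ := (m:ℝ) ^ (-(1:ℝ)/d) with hτ
  rcases le_total ((k:ℝ) * τ) 1 with h | h
  · rw [min_eq_left h]
    have hkpos : (0:ℝ) < k := by exact_mod_cast hk
    have hs : ((k:ℝ)*τ)^d = (k:ℝ)^d / m := by
      rw [mul_pow, tau_pow hd hm]; ring
    rw [hs]
    have hle1 : ((k:ℝ))^d / m ≤ 1 := by
      calc ((k:ℝ))^d / m = ((k:ℝ)*τ)^d := hs.symm
        _ ≤ 1^d := pow_le_pow_left₀ (by positivity) h d
        _ = 1 := one_pow d
    have h1 : (1 - (k:ℝ)^d / m) ≤ Real.exp (-((k:ℝ)^d / m)) := by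
      linarith [Real.add_one_le_exp (-((k:ℝ)^d / m))]
    have h2 : (1 - (k:ℝ)^d / m)^m ≤ Real.exp (-((k:ℝ)^d / m))^m :=
      pow_le_pow_left₀ (by linarith) h1 m
    have h3 : Real.exp (-((k:ℝ)^d / m))^m = Real.exp (-((k:ℝ)^d)) := by
      rw [← Real.exp_nat_mul]
      congr 1
      have hm0 : (m:ℝ) ≠ 0 := by positivity
      field_simp
    have h4 : Real.exp (-((k:ℝ)^d)) ≤ Real.exp (-(k:ℝ)) := by
      apply Real.exp_le_exp.mpr
      have : (k:ℝ) ≤ (k:ℝ)^d := by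
        exact_mod_cast Nat.le_self_pow (by omega) k
      linarith
    have h5 : Real.exp (-(k:ℝ)) ≤ (1/2:ℝ)^k := by
      have he : Real.exp (-(k:ℝ)) = Real.exp (-1)^k := by
        rw [← Real.exp_nat_mul]; congr 1; ring
      rw [he]
      apply pow_le_pow_left₀ (Real.exp_nonneg _) _ k
      have h2e : (2:ℝ) ≤ Real.exp 1 := by linarith [Real.add_one_le_exp (1:ℝ)]
      rw [Real.exp_neg, show (1/2:ℝ) = (2:ℝ)⁻¹ by norm_num]
      exact inv_anti₀ (by norm_num) h2e
    calc (1 - (k:ℝ)^d / m)^m ≤ Real.exp (-((k:ℝ)^d)) := h3 ▸ h2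
      _ ≤ Real.exp (-(k:ℝ)) := h4
      _ ≤ (1/2:ℝ)^k := h5
  · rw [min_eq_right h, one_pow, sub_self, zero_pow (by omega)]
    positivity

lemma real_lower {m : ℕ} (hm : 1 ≤ m) : (1/2:ℝ) ≤ (1 - 1/(2*m))^m := by
  have hm0 : (m:ℝ) ≠ 0 := by positivity
  have hsmall : 1/(2*(m:ℝ)) ≤ 1 := by
    rw [div_le_one (by positivity)]
    have : (1:ℝ) ≤ m := by exact_mod_cast hm
    linarith
  have := one_add_mul_le_pow (a := -(1/(2*(m:ℝ)))) (by linarith) m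
  have he : 1 + (m:ℝ) * -(1/(2*m)) = 1/2 := by field_simp; ring
  calc (1/2:ℝ) = 1 + (m:ℝ) * -(1/(2*m)) := he.symm
    _ ≤ (1 + -(1/(2*(m:ℝ))))^m := this
    _ = (1 - 1/(2*(m:ℝ)))^m := by ring_nf


variable {d m : ℕ}

lemma fiber_open (y : EuclideanSpace ℝ (Fin d)) (t : ℝ) :
    MeasurableSet {x : EuclideanSpace ℝ (Fin d) | ‖y - x‖ < t} := by
  have hc : Continuous fun x : EuclideanSpace ℝ (Fin d) => ‖y - x‖ :=
    (continuous_const.sub continuous_id).norm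
  exact (isOpen_lt hc continuous_const).measurableSet

lemma fiber_compl (y : EuclideanSpace ℝ (Fin d)) (t : ℝ) :
    {x : EuclideanSpace ℝ (Fin d) | t ≤ ‖y - x‖} =
      {x : EuclideanSpace ℝ (Fin d) | ‖y - x‖ < t}ᶜ := by
  ext x; simp [not_lt]

lemma upper_event (hd : 1 ≤ d) (hm : 1 ≤ m) (k : ℕ) (hk : 1 ≤ k) :
    ((Measure.pi fun _ : Fin m => cubeUniform d).prod (cubeUniform d))
      {ω | ∀ j : Fin m, (k:ℝ) * (Real.sqrt d * (m:ℝ) ^ (-(1:ℝ)/d)) ≤ ‖ω.2 - ω.1 j‖}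
      ≤ ENNReal.ofReal ((1/2:ℝ)^k) := by
  set τ := (m:ℝ) ^ (-(1:ℝ)/d) with hτ
  set t := (k:ℝ) * (Real.sqrt d * τ) with ht
  set s := min ((k:ℝ) * τ) 1 with hs
  have hτ0 : 0 < τ := tau_pos hm
  have hs0 : 0 < s := lt_min (by positivity) one_pos
  have hs1 : s ≤ 1 := min_le_right _ _
  rw [event_measure]
  have key : ∀ᵐ y ∂(cubeUniform d),
      (cubeUniform d {x | t ≤ ‖y - x‖})^m ≤ ENNReal.ofReal ((1 - s^d)^m) := by
    filter_upwards [ae_restrict_mem (measurableSet_unitCube d)] with y hy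
    have hball := le_cubeUniform_ball hd hy hs0 hs1
    have hsub : {x : EuclideanSpace ℝ (Fin d) | ‖y - x‖ < s * Real.sqrt d}
        ⊆ {x | ‖y - x‖ < t} := by
      intro x hx
      have : s * Real.sqrt d ≤ t := by
        rw [ht]
        calc s * Real.sqrt d ≤ ((k:ℝ)*τ) * Real.sqrt d :=
              mul_le_mul_of_nonneg_right (min_le_left _ _) (Real.sqrt_nonneg _)
          _ = (k:ℝ) * (Real.sqrt d * τ) := by ring
      exact lt_of_lt_of_le hx this
    have h1 : ENNReal.ofReal (s^d) ≤ cubeUniform d {x | ‖y - x‖ < t} :=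
      le_trans hball (measure_mono hsub)
    have h2 : cubeUniform d {x | t ≤ ‖y - x‖} ≤ ENNReal.ofReal (1 - s^d) := by
      rw [fiber_compl, prob_compl_eq_one_sub (fiber_open y t)]
      calc (1 : ENNReal) - cubeUniform d {x | ‖y - x‖ < t}
          ≤ 1 - ENNReal.ofReal (s^d) := tsub_le_tsub_left h1 1
        _ = ENNReal.ofReal 1 - ENNReal.ofReal (s^d) := by rw [ENNReal.ofReal_one]
        _ = ENNReal.ofReal (1 - s^d) := (ENNReal.ofReal_sub 1 (by positivity)).symm
    calc (cubeUniform d {x | t ≤ ‖y - x‖})^m ≤ (ENNReal.ofReal (1 - s^d))^m :=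
          pow_le_pow_left' h2 m
      _ = ENNReal.ofReal ((1 - s^d)^m) := by
          rw [← ENNReal.ofReal_pow]
          have : s^d ≤ 1 := by
            calc s^d ≤ 1^d := pow_le_pow_left₀ hs0.le hs1 d
              _ = 1 := one_pow d
          linarith
  calc ∫⁻ y, (cubeUniform d {x | t ≤ ‖y - x‖})^m ∂(cubeUniform d)
      ≤ ∫⁻ _y, ENNReal.ofReal ((1 - s^d)^m) ∂(cubeUniform d) := lintegral_mono_ae key
    _ = ENNReal.ofReal ((1 - s^d)^m) := by simp [lintegral_const]
    _ ≤ ENNReal.ofReal ((1/2:ℝ)^k) := ENNReal.ofReal_le_ofReal (real_upper hd hm hk)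

lemma lower_event (hd : 1 ≤ d) (hm : 1 ≤ m) :
    ENNReal.ofReal (1/2:ℝ) ≤
      ((Measure.pi fun _ : Fin m => cubeUniform d).prod (cubeUniform d))
        {ω | ∀ j : Fin m, (m:ℝ) ^ (-(1:ℝ)/d) / 4 ≤ ‖ω.2 - ω.1 j‖} := by
  set τ := (m:ℝ) ^ (-(1:ℝ)/d) with hτ
  have hτ0 : 0 < τ := tau_pos hm
  have hm0 : (0:ℝ) < m := by exact_mod_cast hm
  rw [event_measure]
  have key : ∀ y : EuclideanSpace ℝ (Fin d),
      ENNReal.ofReal (1/2:ℝ) ≤ (cubeUniform d {x | τ/4 ≤ ‖y - x‖})^m := by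
    intro y
    have hball : cubeUniform d {x | ‖y - x‖ < τ/4} ≤ ENNReal.ofReal (1/(2*m)) := by
      have hsub : {x : EuclideanSpace ℝ (Fin d) | ‖y - x‖ < τ/4} ⊆ Metric.ball y (τ/4) := by
        intro x hx
        rw [Metric.mem_ball, dist_eq_norm']
        simpa using hx
      calc cubeUniform d {x | ‖y - x‖ < τ/4} ≤ cubeUniform d (Metric.ball y (τ/4)) :=
            measure_mono hsub
        _ ≤ ENNReal.ofReal ((2*(τ/4))^d) := cubeUniform_ball_le y (by positivity)
        _ ≤ ENNReal.ofReal (1/(2*m)) := by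
            apply ENNReal.ofReal_le_ofReal
            have h1 : (2*(τ/4))^d = τ^d / 2^d := by
              rw [show 2*(τ/4) = τ/2 by ring, div_pow]
            rw [h1, tau_pow hd hm]
            rw [div_div]
            apply div_le_div_of_nonneg_left (by norm_num) (by positivity)
            have h2 : (2:ℝ) ≤ 2^d := by
              calc (2:ℝ) = 2^1 := (pow_one 2).symm
                _ ≤ 2^d := pow_le_pow_right₀ (by norm_num) hd
            calc 2*(m:ℝ) ≤ 2^d * m := by nlinarith
              _ = (m:ℝ) * 2^d := by ring
    have h2 : ENNReal.ofReal (1 - 1/(2*m)) ≤ cubeUniform d {x | τ/4 ≤ ‖y - x‖} := by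
      rw [fiber_compl, prob_compl_eq_one_sub (fiber_open y (τ/4))]
      calc ENNReal.ofReal (1 - 1/(2*(m:ℝ)))
          = ENNReal.ofReal 1 - ENNReal.ofReal (1/(2*(m:ℝ))) :=
            ENNReal.ofReal_sub 1 (by positivity)
        _ = 1 - ENNReal.ofReal (1/(2*(m:ℝ))) := by rw [ENNReal.ofReal_one]
        _ ≤ 1 - cubeUniform d {x | ‖y - x‖ < τ/4} := tsub_le_tsub_left hball 1
    calc ENNReal.ofReal (1/2:ℝ) ≤ ENNReal.ofReal ((1 - 1/(2*(m:ℝ)))^m) :=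
          ENNReal.ofReal_le_ofReal (real_lower hm)
      _ = (ENNReal.ofReal (1 - 1/(2*(m:ℝ))))^m := by
          rw [ENNReal.ofReal_pow]
          have hm1 : (1:ℝ) ≤ m := by exact_mod_cast hm
          have hsmall : 1/(2*(m:ℝ)) ≤ 1 := by
            rw [div_le_one (by positivity)]
            linarith
          linarith
      _ ≤ (cubeUniform d {x | τ/4 ≤ ‖y - x‖})^m := pow_le_pow_left' h2 m
  calc ENNReal.ofReal (1/2:ℝ)
      = ∫⁻ _y, ENNReal.ofReal (1/2:ℝ) ∂(cubeUniform d) := by simp [lintegral_const]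
    _ ≤ ∫⁻ y, (cubeUniform d {x | τ/4 ≤ ‖y - x‖})^m ∂(cubeUniform d) :=
        lintegral_mono (fun y => key y)


lemma sum_halves (m : ℕ) : ∑ k ∈ Finset.Icc 1 m, (1/2:ℝ)^k ≤ 1 := by
  have h : ∑ k ∈ Finset.Icc 1 m, (1/2:ℝ)^k = ∑ i ∈ Finset.range m, (1/2:ℝ)^(1+i) := by
    rw [show Finset.Icc 1 m = Finset.Ico 1 (m+1) by rw [Finset.Ico_add_one_right_eq_Icc],
      Finset.sum_Ico_eq_sum_range]
    simp
  rw [h]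
  have h2 : ∀ i, (1/2:ℝ)^(1+i) = (1/2) * (1/2)^i := fun i => by rw [pow_add, pow_one]
  rw [Finset.sum_congr rfl (fun i _ => h2 i), ← Finset.mul_sum]
  have := sum_geometric_two_le m
  linarith

lemma layer (m : ℕ) (a c sd : ℝ) (ha : 0 < a) (hc0 : 0 ≤ c) (hcs : c ≤ sd)
    (hsd : sd ≤ (m+1) * a) :
    c ≤ a + ∑ k ∈ Finset.Icc 1 m, (if (k:ℝ)*a ≤ c then a else 0) := by
  set n := ⌊c / a⌋₊ with hn
  set j := min n m with hj
  have hsum : (j:ℝ) * a ≤ ∑ k ∈ Finset.Icc 1 m, (if (k:ℝ)*a ≤ c then a else 0) := by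
    have hsub : Finset.Icc 1 j ⊆ Finset.Icc 1 m := by
      apply Finset.Icc_subset_Icc_right
      exact min_le_right _ _
    have htrue : ∀ k ∈ Finset.Icc 1 j, (if (k:ℝ)*a ≤ c then a else 0) = a := by
      intro k hk
      rw [if_pos]
      have hkj : k ≤ j := (Finset.mem_Icc.mp hk).2
      have hkn : (k:ℝ) ≤ n := by exact_mod_cast hkj.trans (min_le_left _ _)
      have hfl : (n:ℝ) ≤ c / a := Nat.floor_le (by positivity)
      calc (k:ℝ) * a ≤ (c/a) * a := by nlinarith
        _ = c := by field_simp
    calc (j:ℝ) * a = ∑ k ∈ Finset.Icc 1 j, a := by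
          rw [Finset.sum_const, Nat.card_Icc]; simp [nsmul_eq_mul]
      _ = ∑ k ∈ Finset.Icc 1 j, (if (k:ℝ)*a ≤ c then a else 0) :=
          (Finset.sum_congr rfl htrue).symm
      _ ≤ ∑ k ∈ Finset.Icc 1 m, (if (k:ℝ)*a ≤ c then a else 0) := by
          apply Finset.sum_le_sum_of_subset_of_nonneg hsub
          intro k _ _
          split <;> [exact ha.le; exact le_refl 0]
  rcases le_or_gt m n with h | h
  · have : j = m := by rw [hj, min_eq_right h]
    rw [this] at hsum
    calc c ≤ sd := hcs
      _ ≤ (m+1) * a := hsd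
      _ = a + (m:ℝ)*a := by ring
      _ ≤ a + ∑ k ∈ Finset.Icc 1 m, (if (k:ℝ)*a ≤ c then a else 0) := by linarith
  · have hjn : j = n := by rw [hj, min_eq_left h.le]
    rw [hjn] at hsum
    have : c < (n+1) * a := by
      have := Nat.lt_succ_floor (c / a)
      have h2 : c / a < n + 1 := by exact_mod_cast Nat.lt_floor_add_one (c/a)
      calc c = (c/a) * a := by field_simp
        _ < ((n:ℝ)+1) * a := by nlinarith
    have h3 : c ≤ a + (n:ℝ)*a := by nlinarith
    linarith


end Stmt15Aux

open Stmt15Aux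

theorem stmt15 (d : ℕ) (hd : 1 ≤ d) :
    ∃ c₁ c₂ : ℝ, 0 < c₁ ∧ c₁ ≤ c₂ ∧
      ∀ m : ℕ, 1 ≤ m →
        c₁ * (m : ℝ) ^ (-(1 : ℝ) / d) ≤
            (∫ ω, (⨅ j : Fin m, ‖ω.2 - ω.1 j‖)
              ∂((Measure.pi fun _ : Fin m => cubeUniform d).prod (cubeUniform d))) ∧
          (∫ ω, (⨅ j : Fin m, ‖ω.2 - ω.1 j‖)
              ∂((Measure.pi fun _ : Fin m => cubeUniform d).prod (cubeUniform d))) ≤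
            c₂ * (m : ℝ) ^ (-(1 : ℝ) / d) := by
  have hsd1 : (1:ℝ) ≤ Real.sqrt d := by
    rw [show (1:ℝ) = Real.sqrt 1 by rw [Real.sqrt_one]]
    exact Real.sqrt_le_sqrt (by exact_mod_cast hd)
  refine ⟨1/8, 2 * Real.sqrt d, by norm_num, by linarith, ?_⟩
  intro m hm
  haveI : Nonempty (Fin m) := ⟨⟨0, hm⟩⟩
  set τ := (m:ℝ) ^ (-(1:ℝ)/d) with hτdef
  have hτ0 : 0 < τ := tau_pos hm
  have hτ1 : τ ≤ 1 := tau_le_one hm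
  have hm0 : (0:ℝ) < m := by exact_mod_cast hm
  have hmτ : 1 ≤ (m:ℝ) * τ := by
    have h1 : τ^d ≤ τ := pow_le_of_le_one hτ0.le hτ1 (by omega)
    have h2 : τ^d = 1/m := tau_pow hd hm
    rw [h2] at h1
    have h3 := (div_le_iff₀ hm0).mp h1
    nlinarith
  set ν := (Measure.pi fun _ : Fin m => cubeUniform d).prod (cubeUniform d) with hνdef
  set f : (Fin m → EuclideanSpace ℝ (Fin d)) × EuclideanSpace ℝ (Fin d) → ℝ :=
    fun ω => ⨅ j : Fin m, ‖ω.2 - ω.1 j‖ with hfdef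
  have hfmeas : Measurable f := by
    apply Measurable.iInf
    intro j
    exact (measurable_snd.sub ((measurable_pi_apply j).comp measurable_fst)).norm
  have hbdd : ∀ ω : (Fin m → EuclideanSpace ℝ (Fin d)) × EuclideanSpace ℝ (Fin d), BddBelow (Set.range fun j : Fin m => ‖ω.2 - ω.1 j‖) := by
    intro ω
    refine ⟨0, ?_⟩
    rintro v ⟨j, rfl⟩
    positivity
  have hf0 : ∀ ω, 0 ≤ f ω := fun ω => le_ciInf (fun j => norm_nonneg _)
  set S := Set.pi Set.univ (fun _ : Fin m => unitCube d) with hSdef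
  have hS : MeasurableSet S := MeasurableSet.univ_pi (fun _ => measurableSet_unitCube d)
  have hcube1 : cubeUniform d (unitCube d) = 1 := by
    rw [cubeUniform, Measure.restrict_apply (measurableSet_unitCube d), Set.inter_self,
      volume_unitCube]
  have hae : ∀ᵐ ω ∂ν, ω ∈ S ×ˢ unitCube d := by
    rw [ae_iff]
    have hin : {ω : (Fin m → EuclideanSpace ℝ (Fin d)) × EuclideanSpace ℝ (Fin d) |
        ¬ ω ∈ S ×ˢ unitCube d} ⊆ (Sᶜ ×ˢ Set.univ) ∪ (Set.univ ×ˢ (unitCube d)ᶜ) := by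
      intro ω hω
      rw [Set.mem_setOf_eq, Set.mem_prod] at hω
      rcases not_and_or.mp hω with h | h
      · exact Or.inl ⟨h, trivial⟩
      · exact Or.inr ⟨trivial, h⟩
    apply measure_mono_null hin
    apply measure_union_null
    · rw [hνdef, Measure.prod_prod, measure_compl hS (measure_ne_top _ _)]
      rw [show (Measure.pi fun _ : Fin m => cubeUniform d) S = 1 by
        rw [hSdef, Measure.pi_pi]; simp [hcube1]]
      simp
    · rw [hνdef, Measure.prod_prod,
        measure_compl (measurableSet_unitCube d) (measure_ne_top _ _)]
      have : cubeUniform d Set.univ = 1 := measure_univ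
      rw [this, hcube1]
      simp
  have hfbound : ∀ ω ∈ S ×ˢ unitCube d, f ω ≤ Real.sqrt d := by
    rintro ω ⟨hω1, hω2⟩
    refine le_trans (ciInf_le (hbdd ω) ⟨0, hm⟩) ?_
    have hω1' : ω.1 ⟨0, hm⟩ ∈ unitCube d := hω1 ⟨0, hm⟩ (Set.mem_univ _)
    have hcoord : ∀ i, |(ω.2 - ω.1 ⟨0, hm⟩) i| ≤ 1 := by
      intro i
      have h1 := hω2 i
      have h2 := hω1' i
      have hsub : (ω.2 - ω.1 ⟨0, hm⟩) i = ω.2 i - ω.1 ⟨0, hm⟩ i := rfl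
      rw [hsub, abs_le]
      constructor <;> [linarith [h1.1, h2.2]; linarith [h1.2, h2.1]]
    have := norm_le_sqrt_of_coord_le hcoord zero_le_one
    simpa using this
  have hfint : Integrable f ν := by
    apply Integrable.mono' (integrable_const (Real.sqrt d)) hfmeas.aestronglyMeasurable
    filter_upwards [hae] with ω hω
    rw [Real.norm_eq_abs, abs_of_nonneg (hf0 ω)]
    exact hfbound ω hω
  constructor
  · -- lower bound
    set A := {ω : (Fin m → EuclideanSpace ℝ (Fin d)) × EuclideanSpace ℝ (Fin d) |
      ∀ j : Fin m, τ/4 ≤ ‖ω.2 - ω.1 j‖} with hAdef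
    have hAmeas : MeasurableSet A := event_measurable d m (τ/4)
    have hge : ENNReal.ofReal (1/2:ℝ) ≤ ν A := lower_event hd hm
    have hind : ∀ ω, A.indicator (fun _ => τ/4) ω ≤ f ω := by
      intro ω
      by_cases h : ω ∈ A
      · rw [Set.indicator_of_mem h]
        exact le_ciInf (fun j => h j)
      · rw [Set.indicator_of_notMem h]
        exact hf0 ω
    have hint_ind : Integrable (A.indicator (fun _ => τ/4)) ν :=
      (integrable_const _).indicator hAmeas
    have h1 : ∫ ω, A.indicator (fun _ => τ/4) ω ∂ν ≤ ∫ ω, f ω ∂ν :=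
      integral_mono hint_ind hfint hind
    rw [integral_indicator_const _ hAmeas, measureReal_def] at h1
    have h2 : (1/2:ℝ) ≤ (ν A).toReal := by
      have h3 := ENNReal.toReal_mono (measure_ne_top ν A) hge
      rwa [ENNReal.toReal_ofReal (by norm_num)] at h3
    have h4 : (1/8:ℝ) * τ ≤ (ν A).toReal • (τ/4) := by
      rw [smul_eq_mul]
      nlinarith
    linarith
  · -- upper bound
    set a := Real.sqrt d * τ with hadef
    have ha0 : 0 < a := by positivity
    set A : ℕ → Set ((Fin m → EuclideanSpace ℝ (Fin d)) × EuclideanSpace ℝ (Fin d)) :=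
      fun k => {ω | ∀ j : Fin m, (k:ℝ) * a ≤ ‖ω.2 - ω.1 j‖} with hAdef
    have hAmeas : ∀ k, MeasurableSet (A k) := fun k => event_measurable d m _
    have hAbound : ∀ k ∈ Finset.Icc 1 m, (ν (A k)).toReal ≤ (1/2:ℝ)^k := by
      intro k hk
      have hk1 : 1 ≤ k := (Finset.mem_Icc.mp hk).1
      have hub := upper_event (d := d) (m := m) hd hm k hk1
      have h5 := ENNReal.toReal_mono (by simp) hub
      rwa [ENNReal.toReal_ofReal (by positivity)] at h5
    set g : (Fin m → EuclideanSpace ℝ (Fin d)) × EuclideanSpace ℝ (Fin d) → ℝ :=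
      fun ω => a + ∑ k ∈ Finset.Icc 1 m, (A k).indicator (fun _ => a) ω with hgdef
    have hsda : Real.sqrt d ≤ ((m:ℝ)+1)*a := by
      have h6 : (1:ℝ) ≤ ((m:ℝ)+1)*τ := by nlinarith
      calc Real.sqrt d = 1 * Real.sqrt d := (one_mul _).symm
        _ ≤ (((m:ℝ)+1)*τ) * Real.sqrt d :=
            mul_le_mul_of_nonneg_right h6 (Real.sqrt_nonneg _)
        _ = ((m:ℝ)+1)*a := by rw [hadef]; ring
    have hgle : ∀ᵐ ω ∂ν, f ω ≤ g ω := by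
      filter_upwards [hae] with ω hω
      have hlayer := layer m a (f ω) (Real.sqrt d) ha0 (hf0 ω) (hfbound ω hω) hsda
      refine le_trans hlayer ?_
      apply add_le_add_right
      apply Finset.sum_le_sum
      intro k _
      by_cases h : (k:ℝ)*a ≤ f ω
      · rw [if_pos h]
        have hmem : ω ∈ A k := fun j => le_trans h (ciInf_le (hbdd ω) j)
        rw [Set.indicator_of_mem hmem]
      · rw [if_neg h]
        exact Set.indicator_nonneg (fun _ _ => ha0.le) ω
    have hgint : Integrable g ν := by
      apply Integrable.add (integrable_const a)
      apply integrable_finset_sum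
      intro k _
      exact (integrable_const a).indicator (hAmeas k)
    have h1 : ∫ ω, f ω ∂ν ≤ ∫ ω, g ω ∂ν := integral_mono_ae hfint hgint hgle
    have h2 : ∫ ω, g ω ∂ν = a + ∑ k ∈ Finset.Icc 1 m, (ν (A k)).toReal * a := by
      rw [hgdef]
      rw [integral_add (integrable_const a)
        (integrable_finset_sum _ (fun k _ => (integrable_const a).indicator (hAmeas k)))]
      rw [integral_const, integral_finset_sum _ (fun k _ => (integrable_const a).indicator (hAmeas k))]
      simp only [measureReal_def, measure_univ, ENNReal.toReal_one, one_smul]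
      congr 1
      apply Finset.sum_congr rfl
      intro k _
      rw [integral_indicator_const _ (hAmeas k), smul_eq_mul, measureReal_def]
    have h3 : ∑ k ∈ Finset.Icc 1 m, (ν (A k)).toReal * a ≤ a := by
      calc ∑ k ∈ Finset.Icc 1 m, (ν (A k)).toReal * a
          ≤ ∑ k ∈ Finset.Icc 1 m, (1/2:ℝ)^k * a := by
            apply Finset.sum_le_sum
            intro k hk
            exact mul_le_mul_of_nonneg_right (hAbound k hk) ha0.le
        _ = (∑ k ∈ Finset.Icc 1 m, (1/2:ℝ)^k) * a := (Finset.sum_mul _ _ _).symm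
        _ ≤ 1 * a := mul_le_mul_of_nonneg_right (sum_halves m) ha0.le
        _ = a := one_mul a
    have hfinal : ∫ ω, f ω ∂ν ≤ 2 * a := by linarith
    calc ∫ ω, f ω ∂ν ≤ 2 * a := hfinal
      _ = 2 * Real.sqrt d * τ := by rw [hadef]; ring
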